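/- If U is a Laver ultrafilter on ℕ, then U is a measure zero ultrafilter and a nowhere dense ultrafilter: for every function F : ℕ → 2^ω there exists x ∈ U such that the topological closure of F[x] in 2^ω has measure zero with respect to the fair-coin product probability measure on 2^ω and, in particular, there exists x ∈ U such that the closure of F[x] is nowhere dense (has empty interior). -/

import Mathlib

/-- A partition of a set `S` into finitely many (nonempty, pairwise disjoint) pieces
covering everything. -/
def IsFinPartition {S : Type*} (P : Set (Set S)) : Prop :=
  P.Finite ∧ ∅ ∉ P ∧ ⋃₀ P = Set.univ ∧ P.Pairwise Disjoint

/-- A Laver ultrafilter. -/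
def IsLaverUltrafilter {S : Type*} (U : Ultrafilter S) : Prop :=
  Filter.cofinite ≤ (U : Filter S) ∧
  ∀ P : ℕ → Set (Set S), (∀ n, IsFinPartition (P n)) →
    ∃ x ∈ U, ∀ n, {p ∈ P n | (x ∩ p).Nonempty}.ncard ≤ n + 1

/-- The basic clopen set `[s]` of branches through the finite binary sequence `s`. -/
def cylinder (s : List Bool) : Set (ℕ → Bool) :=
  {x | ∀ i : Fin s.length, x i = s.get i}

/-- `μ` is the fair-coin product probability measure on `2^ω`: it is a probability
measure giving each basic clopen set `[s]` measure `2^{-|s|}`. -/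
def IsFairCoinMeasure (μ : MeasureTheory.Measure (ℕ → Bool)) : Prop :=
  MeasureTheory.IsProbabilityMeasure μ ∧
  ∀ s : List Bool, μ (cylinder s) = (2 : ENNReal)⁻¹ ^ s.length

lemma cylinder_ofFn {m : ℕ} (s : Fin m → Bool) :
    cylinder (List.ofFn s) = {z : ℕ → Bool | ∀ i : Fin m, z i = s i} := by
  ext z
  simp only [cylinder, List.get_ofFn, Set.mem_setOf_eq]
  constructor
  · intro h i
    have := h (Fin.cast (List.length_ofFn (f := s)).symm i)
    simpa using this
  · intro h i
    have := h (Fin.cast (List.length_ofFn (f := s)) i)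
    simpa using this

lemma cylinder_closed {m : ℕ} (s : Fin m → Bool) :
    IsClosed {z : ℕ → Bool | ∀ i : Fin m, z i = s i} := by
  have : {z : ℕ → Bool | ∀ i : Fin m, z i = s i}
      = ⋂ i : Fin m, (fun z : ℕ → Bool => z i) ⁻¹' {s i} := by
    ext z; simp
  rw [this]
  exact isClosed_iInter fun i => (isClosed_singleton).preimage (continuous_apply _)

lemma ennreal_arith {n c : ℕ} (hc : c ≤ n + 1) :
    (c : ENNReal) * (2 : ENNReal)⁻¹ ^ (2 * n + 2) ≤ (2 : ENNReal)⁻¹ ^ n := by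
  have h2 : (2 : ENNReal) * 2⁻¹ = 1 := ENNReal.mul_inv_cancel (by norm_num) (by norm_num)
  have hsplit : (2 : ENNReal)⁻¹ ^ (2 * n + 2) = 2⁻¹ ^ n * 2⁻¹ ^ (n + 2) := by
    rw [← pow_add]; ring_nf
  rw [hsplit, ← mul_assoc, mul_comm (c : ENNReal), mul_assoc]
  calc (2 : ENNReal)⁻¹ ^ n * ((c : ENNReal) * 2⁻¹ ^ (n + 2))
      ≤ 2⁻¹ ^ n * 1 := by
        apply mul_le_mul_right
        have hcle : (c : ENNReal) ≤ (2 : ENNReal) ^ (n + 2) := by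
          have : (c : ℕ) ≤ 2 ^ (n + 2) := by
            calc c ≤ n + 1 := hc
            _ ≤ 2 ^ (n + 1) := (Nat.lt_two_pow_self (n := n + 1)) |>.le.trans (le_refl _) |>.trans (le_refl _)
            _ ≤ 2 ^ (n + 2) := Nat.pow_le_pow_right (by norm_num) (by omega)
          calc (c : ENNReal) ≤ ((2 ^ (n + 2) : ℕ) : ENNReal) := by exact_mod_cast this
          _ = (2 : ENNReal) ^ (n + 2) := by push_cast; ring
        calc (c : ENNReal) * 2⁻¹ ^ (n + 2)
            ≤ (2 : ENNReal) ^ (n + 2) * 2⁻¹ ^ (n + 2) := mul_le_mul_left hcle _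
          _ = ((2 : ENNReal) * 2⁻¹) ^ (n + 2) := (mul_pow _ _ _).symm
          _ = 1 := by rw [h2, one_pow]
    _ = 2⁻¹ ^ n := mul_one _


theorem stmt_10 (U : Ultrafilter ℕ) (hU : IsLaverUltrafilter U)
    (μ : MeasureTheory.Measure (ℕ → Bool)) (hμ : IsFairCoinMeasure μ)
    (F : ℕ → (ℕ → Bool)) :
    (∃ x ∈ U, μ (closure (F '' x)) = 0) ∧
    (∃ x ∈ U, IsNowhereDense (closure (F '' x))) := by
  obtain ⟨hμP, hμcyl⟩ := hμ
  -- the fibers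
  set fib : ∀ n : ℕ, (Fin (2 * n + 2) → Bool) → Set ℕ :=
    fun n s => {k | ∀ i : Fin (2 * n + 2), F k i = s i} with hfib
  set P : ℕ → Set (Set ℕ) := fun n => {p | p.Nonempty ∧ ∃ s, p = fib n s} with hPdef
  have hPfin : ∀ n, IsFinPartition (P n) := by
    intro n
    refine ⟨?_, ?_, ?_, ?_⟩
    · apply Set.Finite.subset (Set.finite_range (fib n))
      rintro p ⟨-, s, rfl⟩; exact ⟨s, rfl⟩
    · rintro ⟨⟨k, hk⟩, -⟩; exact hk
    · ext k
      simp only [Set.mem_sUnion, Set.mem_univ, iff_true]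
      exact ⟨fib n (fun i => F k i), ⟨⟨k, fun i => rfl⟩, ⟨_, rfl⟩⟩, fun i => rfl⟩
    · rintro p ⟨-, s, rfl⟩ q ⟨-, t, rfl⟩ hpq
      rw [Set.disjoint_left]
      intro k hks hkt
      apply hpq
      have : s = t := funext fun i => (hks i).symm.trans (hkt i)
      rw [this]
  obtain ⟨x, hxU, hx⟩ := hU.2 P hPfin
  -- key measure bound
  have key : ∀ n, μ (closure (F '' x)) ≤ (2 : ENNReal)⁻¹ ^ n := by
    intro n
    classical
    set S : Finset (Fin (2 * n + 2) → Bool) :=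
      Finset.univ.filter (fun s => (x ∩ fib n s).Nonempty) with hSdef
    -- cardinality bound
    have hcard : S.card ≤ n + 1 := by
      have hinj : Set.InjOn (fib n) (S : Set _) := by
        intro s hs t ht hst
        simp only [hSdef, Finset.coe_filter, Set.mem_setOf_eq] at hs
        obtain ⟨k, -, hk⟩ := hs.2
        have hk' : k ∈ fib n t := hst ▸ hk
        exact funext fun i => (hk i).symm.trans (hk' i)
      have hsub : fib n '' (S : Set _) ⊆ {p ∈ P n | (x ∩ p).Nonempty} := by
        rintro p ⟨s, hs, rfl⟩
        simp only [hSdef, Finset.coe_filter, Set.mem_setOf_eq] at hs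
        obtain ⟨k, -, hk⟩ := hs.2
        exact ⟨⟨⟨k, hk⟩, ⟨s, rfl⟩⟩, hs.2⟩
      have hQfin : {p ∈ P n | (x ∩ p).Nonempty}.Finite :=
        (hPfin n).1.subset (Set.sep_subset _ _)
      calc S.card = (S : Set (Fin (2 * n + 2) → Bool)).ncard := (Set.ncard_coe_finset S).symm
        _ = (fib n '' (S : Set (Fin (2 * n + 2) → Bool))).ncard := (Set.ncard_image_of_injOn hinj).symm
        _ ≤ {p ∈ P n | (x ∩ p).Nonempty}.ncard := Set.ncard_le_ncard hsub hQfin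
        _ ≤ n + 1 := hx n
    -- F '' x is covered by the cylinders of sequences in S
    have hcover : F '' x ⊆ ⋃ s ∈ S, {z : ℕ → Bool | ∀ i : Fin (2 * n + 2), z i = s i} := by
      rintro - ⟨k, hk, rfl⟩
      have hS : (fun i : Fin (2 * n + 2) => F k i) ∈ S := by
        simp only [hSdef, Finset.mem_filter, Finset.mem_univ, true_and]
        exact ⟨k, hk, fun i => rfl⟩
      exact Set.mem_biUnion hS (fun i => rfl)
    have hclosed : IsClosed (⋃ s ∈ S, {z : ℕ → Bool | ∀ i : Fin (2 * n + 2), z i = s i}) :=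
      Set.Finite.isClosed_biUnion S.finite_toSet (fun s _ => cylinder_closed s)
    have hmono : μ (closure (F '' x))
        ≤ μ (⋃ s ∈ S, {z : ℕ → Bool | ∀ i : Fin (2 * n + 2), z i = s i}) :=
      MeasureTheory.measure_mono (closure_minimal hcover hclosed)
    have hmeas : ∀ s : Fin (2 * n + 2) → Bool,
        μ {z : ℕ → Bool | ∀ i : Fin (2 * n + 2), z i = s i} = (2 : ENNReal)⁻¹ ^ (2 * n + 2) := by
      intro s
      rw [← cylinder_ofFn s, hμcyl, List.length_ofFn]
    calc μ (closure (F '' x))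
        ≤ μ (⋃ s ∈ S, {z : ℕ → Bool | ∀ i : Fin (2 * n + 2), z i = s i}) := hmono
      _ ≤ ∑ s ∈ S, μ {z : ℕ → Bool | ∀ i : Fin (2 * n + 2), z i = s i} :=
          MeasureTheory.measure_biUnion_finset_le S _
      _ = S.card * (2 : ENNReal)⁻¹ ^ (2 * n + 2) := by
          rw [Finset.sum_congr rfl (fun s _ => hmeas s), Finset.sum_const, nsmul_eq_mul]
      _ ≤ (2 : ENNReal)⁻¹ ^ n := ennreal_arith hcard
  have hzero : μ (closure (F '' x)) = 0 := by
    have htend : Filter.Tendsto (fun n => (2 : ENNReal)⁻¹ ^ n) Filter.atTop (nhds 0) :=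
      ENNReal.tendsto_pow_atTop_nhds_zero_of_lt_one (ENNReal.inv_lt_one.2 ENNReal.one_lt_two)
    exact le_antisymm (ge_of_tendsto' htend key) zero_le
  refine ⟨⟨x, hxU, hzero⟩, ⟨x, hxU, ?_⟩⟩
  -- nowhere dense
  show interior (closure (closure (F '' x))) = ∅
  rw [closure_closure]
  by_contra h
  obtain ⟨y, hy⟩ := Set.nonempty_iff_ne_empty.2 h
  obtain ⟨I, u, h1, h2⟩ := (isOpen_pi_iff.1 isOpen_interior) y hy
  set N := I.sup id + 1 with hN
  have hsub : {z : ℕ → Bool | ∀ i : Fin N, z i = y i} ⊆ closure (F '' x) := by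
    intro z hz
    apply interior_subset
    apply h2
    intro i hi
    have hiN : i < N := Nat.lt_succ_of_le (Finset.le_sup (f := id) hi)
    have : z i = y i := hz ⟨i, hiN⟩
    rw [this]
    exact (h1 i hi).2
  have hμc : μ {z : ℕ → Bool | ∀ i : Fin N, z i = y i} = (2 : ENNReal)⁻¹ ^ N := by
    rw [← cylinder_ofFn (fun i : Fin N => y i), hμcyl, List.length_ofFn]
  have : (2 : ENNReal)⁻¹ ^ N ≤ 0 := by
    rw [← hμc, ← hzero]
    exact MeasureTheory.measure_mono hsub
  exact (pow_ne_zero N (by norm_num : (2 : ENNReal)⁻¹ ≠ 0)) (le_antisymm this zero_le)
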